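/- Let q be a prime power, k ≥ 2 and s ≥ 0 integers. Every (n, k+s-1)-multi-arc K in PG(k-1, q) satisfies n ≤ (s+1)(q+1) + k - 2. -/
import Mathlib


open scoped Classical

noncomputable section

/-- The number of points of the multiset `K` of projective points lying in the
submodule (flat) `W`, counted with multiplicity. -/
def mPointsOn {F V : Type*} [Field F] [AddCommGroup V] [Module F V]
    (K : Multiset (Projectivization F V)) (W : Submodule F V) : ℕ :=
  Multiset.card (K.filter (fun P => P.submodule ≤ W))

/-- The number of points of the finite set `K` of projective points lying in the
submodule (flat) `W`. -/
def pointsOn {F V : Type*} [Field F] [AddCommGroup V] [Module F V]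
    (K : Finset (Projectivization F V)) (W : Submodule F V) : ℕ :=
  (K.filter (fun P => P.submodule ≤ W)).card

/-- `W` is a hyperplane of the projective space `PG(V)`, i.e. a linear subspace of
codimension one (projective codimension one flat). -/
def IsHyp (F : Type*) [Field F] {V : Type*} [AddCommGroup V] [Module F V]
    (W : Submodule F V) : Prop :=
  Module.finrank F W = Module.finrank F V - 1

/-- An `(n, r)`-multi-arc: a multiset of `n > r` projective points such that every
hyperplane contains at most `r` of them (with multiplicity) and some hyperplane
contains exactly `r` of them. -/
def IsMultiArc {F V : Type*} [Field F] [AddCommGroup V] [Module F V]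
    (n r : ℕ) (K : Multiset (Projectivization F V)) : Prop :=
  Multiset.card K = n ∧ r < n ∧
    (∀ W : Submodule F V, IsHyp F W → mPointsOn K W ≤ r) ∧
    (∃ W : Submodule F V, IsHyp F W ∧ mPointsOn K W = r)

/-- An `(n, r)`-arc: a set of `n > r` projective points such that every hyperplane
contains at most `r` of them and some hyperplane contains exactly `r` of them. -/
def IsArc {F V : Type*} [Field F] [AddCommGroup V] [Module F V]
    (n r : ℕ) (K : Finset (Projectivization F V)) : Prop :=
  K.card = n ∧ r < n ∧
    (∀ W : Submodule F V, IsHyp F W → pointsOn K W ≤ r) ∧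
    (∃ W : Submodule F V, IsHyp F W ∧ pointsOn K W = r)

/-- A complete `(n, r)`-arc: one admitting no extension to an `(n+1, r)`-arc. -/
def IsCompleteArc {F V : Type*} [Field F] [AddCommGroup V] [Module F V]
    (n r : ℕ) (K : Finset (Projectivization F V)) : Prop :=
  IsArc n r K ∧ ∀ P ∉ K, ¬ IsArc (n + 1) r (insert P K)

/-- A hyperplane is a secant of the arc `K` (relative to the parameter `r`) if it
contains exactly `r` points of `K`. -/
def IsSecant {F V : Type*} [Field F] [AddCommGroup V] [Module F V]
    (K : Finset (Projectivization F V)) (r : ℕ) (W : Submodule F V) : Prop :=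
  IsHyp F W ∧ pointsOn K W = r

/-- A hyperplane is a tangent of the arc `K` (relative to the parameter `r`) if it
contains a positive number, fewer than `r`, of points of `K`. -/
def IsTangent {F V : Type*} [Field F] [AddCommGroup V] [Module F V]
    (K : Finset (Projectivization F V)) (r : ℕ) (W : Submodule F V) : Prop :=
  IsHyp F W ∧ 0 < pointsOn K W ∧ pointsOn K W < r

/-- `m^s(k,q)`: the maximum size of a complete `(n, k+s-1)`-arc in `PG(k-1,q)`,
where the projective space is coordinatized over the field `F` of order `q`. -/
def mPow (F : Type*) [Field F] (k s : ℕ) : ℕ :=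
  sSup {n | ∃ K : Finset (Projectivization F (Fin k → F)), IsCompleteArc n (k + s - 1) K}


section Aux

open Module Submodule

variable {F V : Type*} [Field F] [AddCommGroup V] [Module F V]

lemma auxLine [FiniteDimensional F V] (S : Submodule F V) {v : V} (hv : v ∉ S) :
    finrank F ↥(S ⊔ F ∙ v) = finrank F S + 1 := by
  have hv0 : v ≠ 0 := fun h => hv (h ▸ S.zero_mem)
  have hinf : S ⊓ (F ∙ v) = ⊥ := by
    rw [eq_bot_iff]
    rintro x ⟨hxS, hxv⟩
    rcases mem_span_singleton.mp hxv with ⟨c, rfl⟩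
    rcases eq_or_ne c 0 with rfl | hc
    · simp
    · exact absurd (by simpa [smul_smul, inv_mul_cancel₀ hc] using S.smul_mem c⁻¹ hxS) hv
  have := Submodule.finrank_sup_add_finrank_inf_eq S (F ∙ v)
  rw [hinf, finrank_bot, finrank_span_singleton hv0] at this
  omega

lemma auxExtend [FiniteDimensional F V] (d : ℕ) (hd : d ≤ finrank F V) :
    ∀ S : Submodule F V, finrank F S ≤ d →
      ∃ T : Submodule F V, S ≤ T ∧ finrank F T = d := by
  induction d with
  | zero =>
    intro S hS
    exact ⟨S, le_refl _, by omega⟩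
  | succ d ih =>
    intro S hS
    rcases eq_or_lt_of_le hS with h | h
    · exact ⟨S, le_refl _, h⟩
    · obtain ⟨T, hST, hT⟩ := ih (by omega) S (by omega)
      obtain ⟨v, hv⟩ := T.exists_of_finrank_lt (by omega)
      have hvT : v ∉ T := by simpa using hv 1 one_ne_zero
      exact ⟨T ⊔ F ∙ v, le_trans hST le_sup_left, by rw [auxLine T hvT, hT]⟩

lemma auxMkEq [FiniteDimensional F V] {v : V} (hv : v ≠ 0) (x : Projectivization F V) :
    Projectivization.mk F v hv = x ↔ v ∈ x.submodule := by
  constructor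
  · rintro rfl
    rw [Projectivization.submodule_mk]
    exact mem_span_singleton_self v
  · intro h
    apply Projectivization.submodule_injective
    rw [Projectivization.submodule_mk]
    exact Submodule.eq_of_le_of_finrank_eq
      ((span_singleton_le_iff_mem _ _).mpr h)
      (by rw [finrank_span_singleton hv, x.finrank_submodule])

lemma auxCardProj {Q : Type*} [Fintype F] [AddCommGroup Q] [Module F Q]
    [Fintype Q] [FiniteDimensional F Q] (h2 : finrank F Q = 2)
    [Fintype (Projectivization F Q)] :
    Fintype.card (Projectivization F Q) = Fintype.card F + 1 := by
  have hq2 : 2 ≤ Fintype.card F := Fintype.one_lt_card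
  have key : Fintype.card {v : Q // ¬ v = 0} =
      ∑ x : Projectivization F Q,
        (Finset.univ.filter
          (fun v : {v : Q // ¬ v = 0} => Projectivization.mk F v.1 v.2 = x)).card := by
    rw [← Finset.card_univ, Finset.card_eq_sum_card_fiberwise
      (f := fun v : {v : Q // ¬ v = 0} => Projectivization.mk F v.1 v.2)
      (t := Finset.univ) (fun v _ => Finset.mem_univ _)]
  have hQcard : Fintype.card Q = Fintype.card F ^ 2 := by
    rw [card_eq_pow_finrank (K := F), h2]
  have hleft : Fintype.card {v : Q // ¬ v = 0} = Fintype.card F ^ 2 - 1 := by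
    rw [Fintype.card_subtype_compl, Fintype.card_subtype_eq, hQcard]
  have hfiber : ∀ x : Projectivization F Q,
      (Finset.univ.filter
        (fun v : {v : Q // ¬ v = 0} => Projectivization.mk F v.1 v.2 = x)).card = Fintype.card F - 1 := by
    intro x
    rw [← Fintype.card_subtype]
    have e : {v : {v : Q // ¬ v = 0} // Projectivization.mk F v.1 v.2 = x} ≃
        {w : ↥x.submodule // ¬ w = 0} :=
      { toFun := fun v => ⟨⟨v.1.1, (auxMkEq v.1.2 x).mp v.2⟩, by
          simp only [ne_eq, Submodule.mk_eq_zero]; exact v.1.2⟩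
        invFun := fun w => ⟨⟨w.1.1, by
          simpa [Submodule.mk_eq_zero] using w.2⟩, (auxMkEq _ x).mpr w.1.2⟩
        left_inv := fun v => by ext; rfl
        right_inv := fun w => by ext; rfl }
    rw [Fintype.card_congr e, Fintype.card_subtype_compl, Fintype.card_subtype_eq]
    rw [card_eq_pow_finrank (K := F), x.finrank_submodule, pow_one]
  rw [hleft] at key
  simp only [hfiber, Finset.sum_const, Finset.card_univ, smul_eq_mul] at key
  obtain ⟨p, hp⟩ : ∃ p, Fintype.card F = p + 2 := ⟨Fintype.card F - 2, by omega⟩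
  rw [hp] at key ⊢
  have h1 : (p + 2) ^ 2 - 1 = (p + 3) * (p + 1) := by
    have : (p + 2) ^ 2 = (p + 3) * (p + 1) + 1 := by ring
    omega
  rw [h1] at key
  have h3 : p + 2 - 1 = p + 1 := by omega
  rw [h3] at key
  have := Nat.eq_of_mul_eq_mul_right (show 0 < p + 1 by omega) key.symm
  omega

end Aux

/-- Every `(n, k+s-1)`-multi-arc in `PG(k-1, q)` satisfies
`n ≤ (s+1)(q+1) + k - 2`. -/
theorem stmt0 {F : Type*} [Field F] [Fintype F] {q k s n : ℕ}
    (hq : Fintype.card F = q) (hk : 2 ≤ k)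
    (K : Multiset (Projectivization F (Fin k → F)))
    (hK : IsMultiArc n (k + s - 1) K) :
    n ≤ (s + 1) * (q + 1) + k - 2 := by
  classical
  set V := (Fin k → F)
  obtain ⟨hcard, hlt, hub, -⟩ := hK
  set r := k + s - 1 with hr
  have hV : Module.finrank F V = k := Module.finrank_fin_fun F
  haveI : FiniteDimensional F V := inferInstance
  have hnk : k - 2 ≤ n := by omega
  -- a submultiset T of K of size k - 2
  set L := K.toList with hL
  set T : Multiset (Projectivization F V) := ↑(L.take (k - 2)) with hT
  have hTK : T ≤ K := by
    rw [hT, ← K.coe_toList]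
    exact ((L.take_sublist (k - 2)).subperm :)
  have hTcard : Multiset.card T = k - 2 := by
    rw [hT]
    simp only [Multiset.coe_card, List.length_take]
    rw [hL]
    simp [hcard]; omega
  -- the span of the points of T
  set sT : Finset V := T.toFinset.image Projectivization.rep with hsT
  set S : Submodule F V := Submodule.span F (↑sT : Set V) with hS
  have hSrank : Module.finrank F S ≤ k - 2 := by
    refine le_trans (finrank_span_finset_le_card sT) ?_
    refine le_trans (Finset.card_image_le) ?_
    rw [← hTcard]
    exact T.toFinset_card_le
  -- extend to Π of finrank k - 2
  obtain ⟨Pi, hSPi, hPirank⟩ := auxExtend (k - 2) (by omega) S hSrank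
  have hTPi : ∀ P ∈ T, P.submodule ≤ Pi := by
    intro P hP
    rw [P.submodule_eq]
    refine le_trans ?_ hSPi
    rw [hS]
    exact Submodule.span_mono (Set.singleton_subset_iff.mpr
      (Finset.mem_coe.mpr (Finset.mem_image_of_mem _ (Multiset.mem_toFinset.mpr hP))))
  set m := mPointsOn K Pi with hm
  have hmge : k - 2 ≤ m := by
    rw [hm, mPointsOn, ← hTcard]
    exact Multiset.card_le_card (Multiset.le_filter.mpr ⟨hTK, hTPi⟩)
  -- m ≤ r : extend Π to a hyperplane
  have hmler : m ≤ r := by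
    obtain ⟨W, hPiW, hWrank⟩ := auxExtend (k - 1) (by omega) Pi (by omega)
    refine le_trans ?_ (hub W (by rw [IsHyp, hWrank, hV]))
    exact Multiset.card_le_card
      (Multiset.monotone_filter_right _ (fun P hP => le_trans hP hPiW))
  -- quotient space
  have hQrank : Module.finrank F (V ⧸ Pi) = 2 := by
    rw [Submodule.finrank_quotient, hV, hPirank]; omega
  haveI : Nontrivial (V ⧸ Pi) := Module.nontrivial_of_finrank_pos (R := F) (by omega)
  haveI : Fintype (V ⧸ Pi) := Fintype.ofFinite _
  haveI : Finite (Projectivization F (V ⧸ Pi)) := Quotient.finite _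
  haveI : Fintype (Projectivization F (V ⧸ Pi)) := Fintype.ofFinite _
  have hin : ∀ P : Projectivization F V, ¬ P.submodule ≤ Pi → Pi.mkQ P.rep ≠ 0 := by
    intro P hP h0
    apply hP
    rw [P.submodule_eq, Submodule.span_singleton_le_iff_mem]
    rwa [Submodule.mkQ_apply, Submodule.Quotient.mk_eq_zero] at h0
  set g : Projectivization F V → Projectivization F (V ⧸ Pi) := fun P =>
    if h : Pi.mkQ P.rep = 0 then Classical.arbitrary _
    else Projectivization.mk F (Pi.mkQ P.rep) h with hg
  set B := K.filter (fun P => ¬ P.submodule ≤ Pi) with hB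
  set M := B.map g with hM
  have hnm : n = m + Multiset.card M := by
    rw [hM, Multiset.card_map, hm, mPointsOn, hB, ← hcard]
    rw [← Multiset.card_add, Multiset.filter_add_not]
  -- the key fiber bound
  have hfiber : ∀ x : Projectivization F (V ⧸ Pi), M.count x ≤ r - m := by
    intro x
    rw [hM, Multiset.count_map]
    by_cases hne : (B.filter fun P => x = g P) = 0
    · rw [hne]; simp
    · obtain ⟨P₀, hP₀⟩ := Multiset.exists_mem_of_ne_zero hne
      rw [Multiset.mem_filter] at hP₀
      obtain ⟨hP₀B, hP₀x⟩ := hP₀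
      rw [hB, Multiset.mem_filter] at hP₀B
      obtain ⟨hP₀K, hP₀Pi⟩ := hP₀B
      have h0 := hin P₀ hP₀Pi
      have hgP₀ : g P₀ = Projectivization.mk F (Pi.mkQ P₀.rep) h0 := by
        rw [hg]; exact dif_neg h0
      -- the hyperplane W
      set W : Submodule F V := Submodule.comap Pi.mkQ x.submodule with hW
      have hxsub : x.submodule = Submodule.span F {Pi.mkQ P₀.rep} := by
        rw [hP₀x, hgP₀, Projectivization.submodule_mk]
      have hWeq : W = Submodule.span F {P₀.rep} ⊔ Pi := by
        rw [hW, hxsub, ← Set.image_singleton, ← Submodule.map_span,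
          Submodule.comap_map_eq, Submodule.ker_mkQ]
      have hP₀notPi : P₀.rep ∉ Pi := by
        intro hmem
        exact h0 (by rwa [Submodule.mkQ_apply, Submodule.Quotient.mk_eq_zero])
      have hWrank : Module.finrank F W = k - 1 := by
        rw [hWeq, sup_comm, auxLine Pi hP₀notPi, hPirank]; omega
      have hWhyp : IsHyp F W := by rw [IsHyp, hWrank, hV]
      -- points of K in W: at least m from Π plus the fiber
      have hsplit : mPointsOn K W =
          Multiset.card ((K.filter (fun P => P.submodule ≤ Pi)).filter
            (fun P => P.submodule ≤ W)) +
          Multiset.card (B.filter (fun P => P.submodule ≤ W)) := by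
        rw [mPointsOn]
        conv_lhs => rw [← Multiset.filter_add_not (fun P => P.submodule ≤ Pi) K]
        rw [Multiset.filter_add, Multiset.card_add, hB]
      have hPiW : Pi ≤ W := by rw [hWeq]; exact le_sup_right
      have hfirst : (K.filter (fun P => P.submodule ≤ Pi)).filter
          (fun P => P.submodule ≤ W) = K.filter (fun P => P.submodule ≤ Pi) := by
        rw [Multiset.filter_eq_self]
        intro P hP
        exact le_trans ((Multiset.mem_filter.mp hP).2) hPiW
      have hsecond : (B.filter fun P => x = g P) ≤
          B.filter (fun P => P.submodule ≤ W) := by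
        rw [Multiset.le_filter]
        refine ⟨Multiset.filter_le _ _, ?_⟩
        intro P hP
        rw [Multiset.mem_filter] at hP
        obtain ⟨hPB, hPx⟩ := hP
        rw [hB, Multiset.mem_filter] at hPB
        obtain ⟨hPK, hPPi⟩ := hPB
        have h0' := hin P hPPi
        have hgP : g P = Projectivization.mk F (Pi.mkQ P.rep) h0' := by
          rw [hg]; exact dif_neg h0'
        have : Pi.mkQ P.rep ∈ x.submodule := by
          rw [hPx, hgP, Projectivization.submodule_mk]
          exact Submodule.mem_span_singleton_self _
        have hrepW : P.rep ∈ W := by rw [hW]; exact this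
        rw [P.submodule_eq, Submodule.span_singleton_le_iff_mem]
        exact hrepW
      have hle := hub W hWhyp
      rw [hsplit, hfirst] at hle
      have := Multiset.card_le_card hsecond
      have hmeq : Multiset.card (Multiset.filter (fun P => P.submodule ≤ Pi) K) = m := rfl
      omega
  -- sum over all points of the quotient projective line
  have hMcard : Multiset.card M ≤ (q + 1) * (r - m) := by
    have h5 : Fintype.card (Projectivization F (V ⧸ Pi)) = q + 1 := by
      rw [auxCardProj hQrank, hq]
    calc Multiset.card M = ∑ x ∈ M.toFinset, M.count x :=
          (Multiset.toFinset_sum_count_eq M).symm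
      _ ≤ ∑ _x ∈ M.toFinset, (r - m) := Finset.sum_le_sum (fun x _ => hfiber x)
      _ = M.toFinset.card * (r - m) := by rw [Finset.sum_const, smul_eq_mul]
      _ ≤ Fintype.card (Projectivization F (V ⧸ Pi)) * (r - m) :=
          Nat.mul_le_mul_right _ (Finset.card_le_univ _)
      _ = (q + 1) * (r - m) := by rw [h5]
  -- final arithmetic
  have hq2 : 2 ≤ q := by rw [← hq]; exact Fintype.one_lt_card
  set t := r - m with ht
  set a := m - (k - 2) with ha
  have e1 : s + 1 = t + a := by omega
  have key : n ≤ m + (q + 1) * t := by omega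
  have e3 : a ≤ a * (q + 1) := Nat.le_mul_of_pos_right _ (by omega)
  have final : n ≤ (s + 1) * (q + 1) + (k - 2) :=
    calc n ≤ m + (q + 1) * t := key
      _ = (k - 2) + a + t * (q + 1) := by rw [mul_comm]; omega
      _ ≤ (k - 2) + a * (q + 1) + t * (q + 1) := by omega
      _ = (k - 2) + (t + a) * (q + 1) := by ring
      _ = (s + 1) * (q + 1) + (k - 2) := by rw [← e1]; ring
  omega

end
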